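/- Let f : ℝ^d → ℝ be continuously differentiable and L-smooth (i.e., ∇f is L-Lipschitz), with a nonempty set S of global minimizers, minimal value f⋆, ∅ ≠ S̃ ⊆ S, and suppose there exist c₁ > 0, c₂ ≥ 0 with ⟨∇f(x), x − proj_{S̃}(x)⟩ ≥ c₁ (f(x) − f⋆) − c₂ for all x ∈ ℝ^d. Let (x^k) be iterates x^{k+1} = x^k − γ^k ∇f(x^k) with the Polyak-type stepsize γ^k = c₁ (f(x^k) − f⋆)/‖∇f(x^k)‖² (defined whenever ∇f(x^k) ≠ 0). Then for every K ≥ 0: min_{0≤k≤K} (f(x^k) − f⋆) ≤ 2L ‖x^0 − x^0_p‖²/(c₁² (K+1)) + 2c₂/c₁, where x^0_p := proj_{S̃}(x^0). -/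

import Mathlib

open scoped RealInnerProductSpace

lemma descent_lemma {d : ℕ} (f : EuclideanSpace ℝ (Fin d) → ℝ)
    (hf : ContDiff ℝ 1 f) (L : ℝ) (hL : 0 < L)
    (hsmooth : ∀ y z, ‖gradient f y - gradient f z‖ ≤ L * ‖y - z‖)
    (a v : EuclideanSpace ℝ (Fin d)) :
    f (a + v) ≤ f a + ⟪gradient f a, v⟫ + L / 2 * ‖v‖ ^ 2 := by
  have hdiff : Differentiable ℝ f := hf.differentiable one_ne_zero
  have hline : ∀ t : ℝ, HasDerivAt (fun t : ℝ => f (a + t • v))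
      ⟪gradient f (a + t • v), v⟫ t := by
    intro t
    have h1 : HasDerivAt (fun t : ℝ => a + t • v) v t := by
      simpa using ((hasDerivAt_id t).smul_const v).const_add a
    have h2 := (hdiff (a + t • v)).hasGradientAt
    rw [hasGradientAt_iff_hasFDerivAt] at h2
    have := h2.comp_hasDerivAt t h1
    simp at this ⊢; exact this
  set ψ : ℝ → ℝ := fun t => f a + t * ⟪gradient f a, v⟫ + t ^ 2 * (L * ‖v‖ ^ 2 / 2)
      - f (a + t • v) with hψdef
  have hψ : ∀ t : ℝ, HasDerivAt ψ
      (⟪gradient f a, v⟫ + (2 * t) * (L * ‖v‖ ^ 2 / 2) - ⟪gradient f (a + t • v), v⟫) t := by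
    intro t
    have h1 : HasDerivAt (fun t : ℝ => f a + t * ⟪gradient f a, v⟫ + t ^ 2 * (L * ‖v‖ ^ 2 / 2))
        (⟪gradient f a, v⟫ + (2 * t) * (L * ‖v‖ ^ 2 / 2)) t := by
      have ha : HasDerivAt (fun t : ℝ => t * ⟪gradient f a, v⟫) ⟪gradient f a, v⟫ t := by
        simpa using (hasDerivAt_id t).mul_const _
      have hb : HasDerivAt (fun t : ℝ => t ^ 2 * (L * ‖v‖ ^ 2 / 2))
          ((2 * t) * (L * ‖v‖ ^ 2 / 2)) t := by
        simpa [mul_comm] using (hasDerivAt_pow 2 t).mul_const (L * ‖v‖ ^ 2 / 2)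
      exact (ha.const_add (f a)).add hb
    exact h1.sub (hline t)
  have hmono : MonotoneOn ψ (Set.Icc (0:ℝ) 1) := by
    apply monotoneOn_of_deriv_nonneg (convex_Icc 0 1)
    · exact (fun t _ => ((hψ t).differentiableAt).continuousAt.continuousWithinAt)
    · intro t ht
      exact ((hψ t).differentiableAt).differentiableWithinAt
    · intro t ht
      rw [interior_Icc] at ht
      rw [(hψ t).deriv]
      have h1 : ⟪gradient f (a + t • v), v⟫ - ⟪gradient f a, v⟫
          ≤ L * t * ‖v‖ ^ 2 := by
        have h2 : ⟪gradient f (a + t • v) - gradient f a, v⟫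
            ≤ ‖gradient f (a + t • v) - gradient f a‖ * ‖v‖ := real_inner_le_norm _ _
        have h3 : ‖gradient f (a + t • v) - gradient f a‖ ≤ L * ‖t • v‖ := by
          simpa using hsmooth (a + t • v) a
        have h4 : ‖t • v‖ = t * ‖v‖ := by
          rw [norm_smul, Real.norm_eq_abs, abs_of_pos ht.1]
        rw [inner_sub_left] at h2
        rw [h4] at h3
        nlinarith [mul_le_mul_of_nonneg_right h3 (norm_nonneg v)]
      nlinarith
  have h01 := hmono (Set.left_mem_Icc.2 zero_le_one) (Set.right_mem_Icc.2 zero_le_one)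
    zero_le_one
  have hψ0 : ψ 0 = 0 := by simp [hψdef]
  have hψ1 : ψ 1 = f a + ⟪gradient f a, v⟫ + L * ‖v‖ ^ 2 / 2 - f (a + v) := by
    simp [hψdef]
  rw [hψ0, hψ1] at h01
  linarith

lemma grad_sq_le_aux {d : ℕ} (f : EuclideanSpace ℝ (Fin d) → ℝ)
    (hf : ContDiff ℝ 1 f) (L : ℝ) (hL : 0 < L)
    (hsmooth : ∀ y z, ‖gradient f y - gradient f z‖ ≤ L * ‖y - z‖)
    (fstar : ℝ) (hlow : ∀ y, fstar ≤ f y) (a : EuclideanSpace ℝ (Fin d)) :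
    ‖gradient f a‖ ^ 2 ≤ 2 * L * (f a - fstar) := by
  have h := descent_lemma f hf L hL hsmooth a (-(L⁻¹ • gradient f a))
  have h1 : ⟪gradient f a, -(L⁻¹ • gradient f a)⟫ = -(L⁻¹ * ‖gradient f a‖ ^ 2) := by
    rw [inner_neg_right, real_inner_smul_right, real_inner_self_eq_norm_sq]
  have h2 : ‖-(L⁻¹ • gradient f a)‖ ^ 2 = L⁻¹ ^ 2 * ‖gradient f a‖ ^ 2 := by
    rw [norm_neg, norm_smul, mul_pow, Real.norm_eq_abs, sq_abs]
  have h3 := hlow (a + -(L⁻¹ • gradient f a))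
  rw [h1, h2] at h
  have hLne : L ≠ 0 := ne_of_gt hL
  have e2 : L / 2 * (L⁻¹ ^ 2 * ‖gradient f a‖ ^ 2) = L⁻¹ * ‖gradient f a‖ ^ 2 / 2 := by
    field_simp
  have key : L⁻¹ * ‖gradient f a‖ ^ 2 / 2 ≤ f a - fstar := by linarith
  have key2 := mul_le_mul_of_nonneg_left key hL.le
  have e4 : L * (L⁻¹ * ‖gradient f a‖ ^ 2 / 2) = ‖gradient f a‖ ^ 2 / 2 := by
    field_simp
  linarith
theorem polyak_stepsize_smooth_rate
    {d : ℕ} (f : EuclideanSpace ℝ (Fin d) → ℝ)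
    (hf : ContDiff ℝ 1 f)
    (L : ℝ) (hL : 0 < L)
    (hsmooth : ∀ y z, ‖gradient f y - gradient f z‖ ≤ L * ‖y - z‖)
    (S St : Set (EuclideanSpace ℝ (Fin d)))
    (hSne : S.Nonempty)
    (hSmin : ∀ s ∈ S, ∀ y, f s ≤ f y)
    (fstar : ℝ) (hfstar : ∀ s ∈ S, f s = fstar)
    (hStS : St ⊆ S) (hStne : St.Nonempty)
    (proj : EuclideanSpace ℝ (Fin d) → EuclideanSpace ℝ (Fin d))
    (hproj : ∀ y, proj y ∈ St ∧ ∀ z ∈ St, ‖y - proj y‖ ≤ ‖y - z‖)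
    (c₁ c₂ : ℝ) (hc₁ : 0 < c₁) (hc₂ : 0 ≤ c₂)
    (hass : ∀ y, c₁ * (f y - fstar) - c₂ ≤ ⟪gradient f y, y - proj y⟫)
    (x : ℕ → EuclideanSpace ℝ (Fin d)) (γ : ℕ → ℝ)
    (hupd : ∀ k, x (k + 1) = x k - γ k • gradient f (x k))
    (hγ : ∀ k, γ k = c₁ * (f (x k) - fstar) / ‖gradient f (x k)‖ ^ 2)
    (K : ℕ) :
    (Finset.range (K + 1)).inf' ⟨0, Finset.mem_range.mpr (Nat.succ_pos K)⟩ (fun k => f (x k) - fstar) ≤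
      2 * L * ‖x 0 - proj (x 0)‖ ^ 2 / (c₁ ^ 2 * (K + 1)) + 2 * c₂ / c₁ := by
  obtain ⟨s₀, hs₀⟩ := hSne
  have hlow : ∀ y, fstar ≤ f y := fun y => (hfstar s₀ hs₀) ▸ hSmin s₀ hs₀ y
  have hgb : ∀ a, ‖gradient f a‖ ^ 2 ≤ 2 * L * (f a - fstar) :=
    grad_sq_le_aux f hf L hL hsmooth fstar hlow
  set m := (Finset.range (K + 1)).inf' ⟨0, Finset.mem_range.mpr (Nat.succ_pos K)⟩
      (fun k => f (x k) - fstar) with hm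
  have hmle : ∀ k, k ≤ K → m ≤ f (x k) - fstar := by
    intro k hk
    exact Finset.inf'_le _ (Finset.mem_range.2 (Nat.lt_succ_of_le hk))
  have hfirst : 0 ≤ 2 * L * ‖x 0 - proj (x 0)‖ ^ 2 / (c₁ ^ 2 * ((K : ℝ) + 1)) := by
    positivity
  by_cases hcase : m ≤ 2 * c₂ / c₁
  · linarith
  push_neg at hcase
  have h2c : 0 ≤ 2 * c₂ / c₁ := by positivity
  -- one-step decrease
  have hstep : ∀ k, 2 * c₂ / c₁ < f (x k) - fstar →
      ‖x (k+1) - proj (x (k+1))‖ ^ 2 ≤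
        ‖x k - proj (x k)‖ ^ 2 - c₁ / (2 * L) * (c₁ * (f (x k) - fstar) - 2 * c₂) := by
    intro k hPk
    have hPk0 : 0 < f (x k) - fstar := lt_of_le_of_lt h2c hPk
    have h2c2 : 2 * c₂ < c₁ * (f (x k) - fstar) := by
      have := (div_lt_iff₀ hc₁).mp hPk
      linarith
    set g := gradient f (x k) with hg
    have hgne : g ≠ 0 := by
      intro h0
      have h := hass (x k)
      rw [← hg, h0, inner_zero_left] at h
      nlinarith
    have hng : 0 < ‖g‖ ^ 2 := pow_pos (norm_pos_iff.mpr hgne) 2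
    have hγk : γ k = c₁ * (f (x k) - fstar) / ‖g‖ ^ 2 := hγ k
    have hγpos : 0 < γ k := by rw [hγk]; positivity
    have hγg : γ k * ‖g‖ ^ 2 = c₁ * (f (x k) - fstar) := by
      rw [hγk]; field_simp
    have hγlb : c₁ / (2 * L) ≤ γ k := by
      rw [hγk, div_le_div_iff₀ (by positivity) hng]
      have hb := hgb (x k)
      nlinarith
    have hproj1 : ‖x (k+1) - proj (x (k+1))‖ ≤ ‖x (k+1) - proj (x k)‖ :=
      (hproj (x (k+1))).2 (proj (x k)) (hproj (x k)).1
    have hD1 : ‖x (k+1) - proj (x (k+1))‖ ^ 2 ≤ ‖x (k+1) - proj (x k)‖ ^ 2 :=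
      pow_le_pow_left₀ (norm_nonneg _) hproj1 2
    have hexp : x (k+1) - proj (x k) = (x k - proj (x k)) - γ k • g := by
      rw [hupd k, sub_right_comm]
    have hnorm : ‖(x k - proj (x k)) - γ k • g‖ ^ 2
        = ‖x k - proj (x k)‖ ^ 2 - 2 * (γ k * ⟪x k - proj (x k), g⟫)
          + γ k ^ 2 * ‖g‖ ^ 2 := by
      rw [norm_sub_sq_real, real_inner_smul_right, norm_smul, mul_pow,
        Real.norm_eq_abs, sq_abs]
    have hinner : c₁ * (f (x k) - fstar) - c₂ ≤ ⟪x k - proj (x k), g⟫ := by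
      have h := hass (x k)
      rwa [real_inner_comm] at h
    have e5 : γ k ^ 2 * ‖g‖ ^ 2 = γ k * (c₁ * (f (x k) - fstar)) := by
      rw [pow_two, mul_assoc, hγg]
    have t1 : γ k * (c₁ * (f (x k) - fstar) - c₂) ≤ γ k * ⟪x k - proj (x k), g⟫ :=
      mul_le_mul_of_nonneg_left hinner hγpos.le
    have t2 : c₁ / (2 * L) * (c₁ * (f (x k) - fstar) - 2 * c₂)
        ≤ γ k * (c₁ * (f (x k) - fstar) - 2 * c₂) :=
      mul_le_mul_of_nonneg_right hγlb (by linarith)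
    calc ‖x (k+1) - proj (x (k+1))‖ ^ 2
        ≤ ‖x (k+1) - proj (x k)‖ ^ 2 := hD1
      _ = ‖x k - proj (x k)‖ ^ 2 - 2 * (γ k * ⟪x k - proj (x k), g⟫)
          + γ k ^ 2 * ‖g‖ ^ 2 := by rw [hexp, hnorm]
      _ ≤ ‖x k - proj (x k)‖ ^ 2 - c₁ / (2 * L) * (c₁ * (f (x k) - fstar) - 2 * c₂) := by
          rw [e5]; linarith
  -- telescoping
  have hsum : ∀ k, k ≤ K + 1 → ‖x k - proj (x k)‖ ^ 2 ≤
      ‖x 0 - proj (x 0)‖ ^ 2 - (k : ℝ) * (c₁ / (2 * L) * (c₁ * m - 2 * c₂)) := by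
    intro k hk
    induction k with
    | zero => simp
    | succ n ih =>
      have hn' : n ≤ K := Nat.lt_succ_iff.mp hk
      have hmn : m ≤ f (x n) - fstar := hmle n hn'
      have h1 := hstep n (lt_of_lt_of_le hcase hmn)
      have h2 := ih (le_trans (Nat.le_succ n) hk)
      have h3 : c₁ / (2 * L) * (c₁ * m - 2 * c₂)
          ≤ c₁ / (2 * L) * (c₁ * (f (x n) - fstar) - 2 * c₂) := by
        apply mul_le_mul_of_nonneg_left _ (by positivity)
        nlinarith
      push_cast
      linarith
  have hfin := hsum (K + 1) le_rfl
  have hDnn : (0:ℝ) ≤ ‖x (K+1) - proj (x (K+1))‖ ^ 2 := by positivity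
  push_cast at hfin
  have h1 : ((K : ℝ) + 1) * (c₁ / (2 * L) * (c₁ * m - 2 * c₂))
      ≤ ‖x 0 - proj (x 0)‖ ^ 2 := by linarith
  have h2 : m - 2 * c₂ / c₁
      ≤ 2 * L * ‖x 0 - proj (x 0)‖ ^ 2 / (c₁ ^ 2 * ((K : ℝ) + 1)) := by
    rw [le_div_iff₀ (by positivity)]
    have h1' := mul_le_mul_of_nonneg_left h1 (by positivity : (0:ℝ) ≤ 2 * L)
    have e6 : 2 * L * (((K : ℝ) + 1) * (c₁ / (2 * L) * (c₁ * m - 2 * c₂)))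
        = ((K : ℝ) + 1) * (c₁ * (c₁ * m - 2 * c₂)) := by
      field_simp <;> ring
    have e7 : (m - 2 * c₂ / c₁) * (c₁ ^ 2 * ((K : ℝ) + 1))
        = ((K : ℝ) + 1) * (c₁ * (c₁ * m - 2 * c₂)) := by
      field_simp <;> ring
    linarith
  linarith
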